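/- Let p > 1 be a real number, d a natural number, and P a complex polynomial of degree at most d with P not identically zero. Define f(s) = P(p^{-s}) for complex s. Then for every real T such that f has no zeros on the segment {it : T ≤ t ≤ T+1}, one has ∫_T^{T+1} |Re(f'(it)/f(it))| dt ≤ d(π + log p). -/

import Mathlib

set_option maxHeartbeats 1000000


open Complex Polynomial MeasureTheory

set_option maxHeartbeats 1000000

open Complex intervalIntegral MeasureTheory

lemma half_le_re_inv_one_sub {u : ℂ} (hu : ‖u‖ < 1) :
    1/2 ≤ ((1 - u)⁻¹).re := by
  have h1 : Complex.normSq u < 1 := by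
    have := Complex.sq_norm u
    nlinarith [norm_nonneg u]
  rw [Complex.normSq_apply] at h1
  have hpos : 0 < Complex.normSq (1 - u) := by
    rw [Complex.normSq_pos]
    intro h
    have : u = 1 := by linear_combination -h
    rw [this] at hu; simp at hu
  rw [Complex.inv_re, le_div_iff₀ hpos]
  have h2 := hpos
  rw [Complex.normSq_apply] at h2 ⊢
  simp only [Complex.sub_re, Complex.sub_im, Complex.one_re, Complex.one_im] at *
  nlinarith

lemma one_sub_ne_and_slit {u : ℂ} (hu : ‖u‖ < 1) :
    (1 - u) ∈ Complex.slitPlane ∧ (1 - u) ≠ 0 := by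
  have hre : 0 < (1 - u).re := by
    have h : u.re < 1 := lt_of_le_of_lt (le_trans (le_abs_self _) (Complex.abs_re_le_norm u)) hu
    simp only [Complex.sub_re, Complex.one_re]
    linarith
  exact ⟨Or.inl hre, fun h => by rw [h] at hre; simp at hre⟩

lemma key_ftc (T : ℝ) (c : ℂ) (u : ℝ → ℂ)
    (hu : ∀ t, HasDerivAt u (c * u t) t) (hu1 : ∀ t, ‖u t‖ < 1) :
    IntervalIntegrable (fun t => ((-(c * u t)) / (1 - u t)).im) volume T (T+1) ∧
    |∫ t in T..T+1, ((-(c * u t)) / (1 - u t)).im| ≤ Real.pi := by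
  have hucont : Continuous u := by
    rw [continuous_iff_continuousAt]; exact fun t => (hu t).differentiableAt.continuousAt
  have hne : ∀ t, (1 - u t) ≠ 0 := fun t => (one_sub_ne_and_slit (hu1 t)).2
  have hcont : Continuous (fun t => ((-(c * u t)) / (1 - u t)).im) := by
    apply Complex.continuous_im.comp
    exact ((continuous_const.mul hucont).neg.div ((continuous_const.sub hucont)) hne)
  have hG : ∀ t : ℝ, HasDerivAt (fun t => (Complex.log (1 - u t)).im)
      (((-(c * u t)) / (1 - u t)).im) t := by
    intro t
    have h1 : HasDerivAt (fun t => 1 - u t) (-(c * u t)) t := (hu t).const_sub 1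
    have h2 := h1.clog_real (one_sub_ne_and_slit (hu1 t)).1
    exact (Complex.imCLM.hasFDerivAt.comp_hasDerivAt t h2 :)
  have hint : IntervalIntegrable (fun t => ((-(c * u t)) / (1 - u t)).im) volume T (T+1) := hcont.intervalIntegrable T (T+1)
  refine ⟨hint, ?_⟩
  rw [intervalIntegral.integral_eq_sub_of_hasDerivAt (fun t _ => hG t) hint]
  have harg : ∀ t : ℝ, |(Complex.log (1 - u t)).im| ≤ Real.pi / 2 := by
    intro t
    rw [Complex.log_im, Complex.abs_arg_le_pi_div_two_iff]
    have h : (u t).re < 1 := lt_of_le_of_lt (le_trans (le_abs_self _) (Complex.abs_re_le_norm (u t))) (hu1 t)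
    simp only [Complex.sub_re, Complex.one_re]
    linarith
  have h1 := abs_le.mp (harg (T+1))
  have h2 := abs_le.mp (harg T)
  rw [abs_le]
  constructor <;> [skip; skip] <;> cases h1 <;> cases h2 <;> linarith

lemma hasDerivAt_cexp_real (c : ℂ) (t : ℝ) :
    HasDerivAt (fun t : ℝ => Complex.exp (c * t)) (c * Complex.exp (c * t)) t := by
  have h0 : HasDerivAt (fun t : ℝ => (t : ℂ)) 1 t := by
    simpa using (hasDerivAt_id t).ofReal_comp
  have := (h0.const_mul c).cexp
  simpa [mul_comm] using this

lemma abs_exp_I_mul (L t : ℝ) : ‖Complex.exp (-(Complex.I * L) * t)‖ = 1 := by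
  rw [Complex.norm_exp]
  simp [Complex.mul_re]

lemma div_one_sub_eq (w : ℂ) (h : (1:ℂ) - w ≠ 0) : w / (1 - w) = (1 - w)⁻¹ - 1 := by
  rw [eq_sub_iff_add_eq, div_add' _ _ _ h]
  rw [show w + 1 * (1 - w) = 1 by ring, one_div]

lemma perFactor {L : ℝ} (hL : 0 < L) (T : ℝ) (r : ℂ)
    (hr : ∀ t ∈ Set.Icc T (T+1), Complex.exp (-(Complex.I * (L:ℂ)) * t) ≠ r) :
    (∫ t in T..T+1,
      |((-(L:ℂ) * Complex.exp (-(Complex.I * (L:ℂ)) * t)) /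
        (Complex.exp (-(Complex.I * (L:ℂ)) * t) - r)).re|) ≤ Real.pi + L := by
  set E : ℝ → ℂ := fun t => Complex.exp (-(Complex.I * (L:ℂ)) * t) with hEdef
  have hE0 : ∀ t, E t ≠ 0 := fun t => Complex.exp_ne_zero _
  have hEabs : ∀ t, ‖E t‖ = 1 := fun t => abs_exp_I_mul L t
  have hEderiv : ∀ t, HasDerivAt E (-(Complex.I * (L:ℂ)) * E t) t :=
    fun t => hasDerivAt_cexp_real _ t
  rcases lt_trichotomy ‖r‖ 1 with h | h | h
  · -- |r| < 1
    set u : ℝ → ℂ := fun t => r * Complex.exp ((Complex.I * (L:ℂ)) * t) with hudef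
    have hu : ∀ t, HasDerivAt u ((Complex.I * (L:ℂ)) * u t) t := by
      intro t
      have := (hasDerivAt_cexp_real (Complex.I * (L:ℂ)) t).const_mul r
      simpa [hudef, mul_comm, mul_left_comm] using this
    have hu1 : ∀ t, ‖u t‖ < 1 := by
      intro t
      rw [hudef]
      simp only [norm_mul, Complex.norm_exp]
      have : ((Complex.I * (L:ℂ)) * (t:ℂ)).re = 0 := by simp [Complex.mul_re]
      rw [this]
      simpa using h
    have huE : ∀ t, E t * u t = r := by
      intro t
      rw [hudef, hEdef]
      simp only []
      rw [mul_comm r, ← mul_assoc, ← Complex.exp_add]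
      norm_num
    have h1u : ∀ t, (1 : ℂ) - u t ≠ 0 := fun t => (one_sub_ne_and_slit (hu1 t)).2
    have key := key_ftc T (Complex.I * (L:ℂ)) u hu hu1
    have hident : ∀ t, |((-(L:ℂ) * E t) / (E t - r)).re| =
        L - ((-((Complex.I * (L:ℂ)) * u t)) / (1 - u t)).im := by
      intro t
      have hEr : E t - r = E t * (1 - u t) := by
        rw [mul_sub, mul_one, huE t]
      have hstep1 : (-(L:ℂ) * E t) / (E t - r) = -(L:ℂ) * ((1 - u t)⁻¹) := by
        rw [hEr, mul_comm (-(L:ℂ)) (E t), mul_div_mul_left _ _ (hE0 t), div_eq_mul_inv,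
          neg_mul]
      have hstep2 : (-((Complex.I * (L:ℂ)) * u t)) / (1 - u t) =
          -(Complex.I * (L:ℂ)) * ((1 - u t)⁻¹ - 1) := by
        rw [neg_mul_eq_neg_mul, mul_div_assoc, div_one_sub_eq _ (h1u t)]
      rw [hstep1, hstep2]
      have hre : (-(L:ℂ) * ((1 - u t)⁻¹)).re = -(L * ((1 - u t)⁻¹).re) := by
        simp only [Complex.neg_re, Complex.neg_im, Complex.mul_re, Complex.ofReal_re, Complex.ofReal_im]
        ring
      have him : (-(Complex.I * (L:ℂ)) * ((1 - u t)⁻¹ - 1)).im =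
          -(L * (((1 - u t)⁻¹).re - 1)) := by
        simp only [Complex.neg_im, Complex.neg_re, Complex.mul_im, Complex.mul_re,
          Complex.I_re, Complex.I_im, Complex.ofReal_re, Complex.ofReal_im,
          Complex.sub_re, Complex.sub_im, Complex.one_re, Complex.one_im]
        ring
      rw [hre, him, abs_of_nonpos]
      · ring
      · have := half_le_re_inv_one_sub (hu1 t)
        nlinarith
    calc ∫ t in T..T+1, |((-(L:ℂ) * E t) / (E t - r)).re|
        = ∫ t in T..T+1, (L - ((-((Complex.I * (L:ℂ)) * u t)) / (1 - u t)).im) := by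
          apply intervalIntegral.integral_congr
          intro t _
          exact hident t
      _ = L - ∫ t in T..T+1, ((-((Complex.I * (L:ℂ)) * u t)) / (1 - u t)).im := by
          rw [intervalIntegral.integral_sub (intervalIntegrable_const) key.1,
            intervalIntegral.integral_const]
          norm_num
      _ ≤ Real.pi + L := by
          have := abs_le.mp key.2
          linarith [this.1]
  · -- |r| = 1
    have hconst : ∀ t ∈ Set.uIcc T (T+1),
        |((-(L:ℂ) * E t) / (E t - r)).re| = L / 2 := by
      intro t ht
      rw [Set.uIcc_of_le (by linarith : T ≤ T+1)] at ht
      have hEr : E t - r ≠ 0 := sub_ne_zero.mpr (hr t ht)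
      have hb0 : Complex.normSq (E t - r) ≠ 0 := (Complex.normSq_pos.mpr hEr).ne'
      have hnE : (E t).re * (E t).re + (E t).im * (E t).im = 1 := by
        have := Complex.normSq_apply (E t)
        rw [← this, Complex.normSq_eq_norm_sq, hEabs t]; norm_num
      have hnr : r.re * r.re + r.im * r.im = 1 := by
        have := Complex.normSq_apply r
        rw [← this, Complex.normSq_eq_norm_sq, h]; norm_num
      have hhalf : ((E t) / (E t - r)).re = 1/2 := by
        rw [Complex.div_re]
        rw [Complex.normSq_apply] at hb0 ⊢
        simp only [Complex.sub_re, Complex.sub_im] at hb0 ⊢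
        rw [← add_div, div_eq_iff hb0]
        nlinarith [hnE, hnr]
      have : (-(L:ℂ) * E t) / (E t - r) = -(L:ℂ) * ((E t) / (E t - r)) := by
        ring
      rw [this]
      have : (-(L:ℂ) * ((E t) / (E t - r))).re = -(L * ((E t) / (E t - r)).re) := by
        simp only [Complex.neg_re, Complex.neg_im, Complex.mul_re, Complex.ofReal_re, Complex.ofReal_im]
        ring
      rw [this, hhalf, abs_of_nonpos (by linarith)]
      ring
    rw [intervalIntegral.integral_congr hconst, intervalIntegral.integral_const]
    simp only [smul_eq_mul]
    have hpi := Real.pi_pos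
    nlinarith
  · -- |r| > 1
    have hr0 : r ≠ 0 := by
      intro h0; rw [h0] at h; simp at h; linarith
    set u : ℝ → ℂ := fun t => E t * r⁻¹ with hudef
    have hu : ∀ t, HasDerivAt u ((-(Complex.I * (L:ℂ))) * u t) t := by
      intro t
      have := (hEderiv t).mul_const r⁻¹
      simpa [hudef, mul_assoc] using this
    have hu1 : ∀ t, ‖u t‖ < 1 := by
      intro t
      rw [hudef]
      simp only [norm_mul, norm_inv, hEabs t, one_mul]
      rw [inv_lt_one_iff₀]
      right; exact h
    have hru : ∀ t, r * u t = E t := by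
      intro t
      rw [hudef]
      field_simp
    have h1u : ∀ t, (1 : ℂ) - u t ≠ 0 := fun t => (one_sub_ne_and_slit (hu1 t)).2
    have key := key_ftc T (-(Complex.I * (L:ℂ))) u hu hu1
    have hident : ∀ t, ((-(L:ℂ) * E t) / (E t - r)).re =
        ((-((-(Complex.I * (L:ℂ))) * u t)) / (1 - u t)).im := by
      intro t
      have hEr : E t - r = r * (u t - 1) := by
        rw [mul_sub, mul_one, hru t]
      have hstep1 : (-(L:ℂ) * E t) / (E t - r) = (L:ℂ) * ((1 - u t)⁻¹ - 1) := by
        have hEr' : E t - r = (-r) * (1 - u t) := by rw [hEr]; ring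
        have hnum : -(L:ℂ) * E t = (-r) * ((L:ℂ) * u t) := by rw [← hru t]; ring
        rw [hEr', hnum, mul_div_mul_left _ _ (neg_ne_zero.mpr hr0), mul_div_assoc,
          div_one_sub_eq _ (h1u t)]
      have hstep2 : (-((-(Complex.I * (L:ℂ))) * u t)) / (1 - u t) =
          (Complex.I * (L:ℂ)) * ((1 - u t)⁻¹ - 1) := by
        rw [neg_mul, neg_neg, mul_div_assoc, div_one_sub_eq _ (h1u t)]
      rw [hstep1, hstep2]
      have hre : ((L:ℂ) * ((1 - u t)⁻¹ - 1)).re = L * (((1 - u t)⁻¹).re - 1) := by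
        simp only [Complex.mul_re, Complex.ofReal_re, Complex.ofReal_im, Complex.sub_re,
          Complex.sub_im, Complex.one_re, Complex.one_im]
        ring
      have him : ((Complex.I * (L:ℂ)) * ((1 - u t)⁻¹ - 1)).im =
          L * (((1 - u t)⁻¹).re - 1) := by
        simp only [Complex.mul_im, Complex.mul_re, Complex.I_re, Complex.I_im,
          Complex.ofReal_re, Complex.ofReal_im, Complex.sub_re, Complex.sub_im,
          Complex.one_re, Complex.one_im]
        ring
      rw [hre, him]
    have hEr0 : ∀ t, E t - r ≠ 0 := by
      intro t hc
      have h2 : ‖E t‖ = ‖r‖ := by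
        rw [sub_eq_zero.mp hc]
      rw [hEabs t] at h2
      linarith
    have hcontE : Continuous E := by
      apply Complex.continuous_exp.comp
      exact (continuous_const.mul Complex.continuous_ofReal)
    have hcont1 : Continuous (fun t => |((-(L:ℂ) * E t) / (E t - r)).re|) := by
      apply Continuous.abs
      apply Complex.continuous_re.comp
      exact ((continuous_const.mul hcontE).div ((hcontE.sub continuous_const)) hEr0)
    have hint1 : IntervalIntegrable (fun t => |((-(L:ℂ) * E t) / (E t - r)).re|)
        MeasureTheory.volume T (T+1) := hcont1.intervalIntegrable T (T+1)
    have hint2 : IntervalIntegrable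
        (fun t => ((-((-(Complex.I * (L:ℂ))) * u t)) / (1 - u t)).im + L)
        MeasureTheory.volume T (T+1) := key.1.add intervalIntegrable_const
    have hmono : ∀ t ∈ Set.Icc T (T+1), |((-(L:ℂ) * E t) / (E t - r)).re| ≤
        ((-((-(Complex.I * (L:ℂ))) * u t)) / (1 - u t)).im + L := by
      intro t _
      rw [← hident t]
      have hlow : -(L/2) ≤ ((-(L:ℂ) * E t) / (E t - r)).re := by
        have hstep1 : ((-(L:ℂ) * E t) / (E t - r)).re = L * (((1 - u t)⁻¹).re - 1) := by
          rw [hident t]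
          have hstep2 : (-((-(Complex.I * (L:ℂ))) * u t)) / (1 - u t) =
              (Complex.I * (L:ℂ)) * ((1 - u t)⁻¹ - 1) := by
            rw [neg_mul, neg_neg, mul_div_assoc, div_one_sub_eq _ (h1u t)]
          rw [hstep2]
          simp only [Complex.mul_im, Complex.mul_re, Complex.I_re, Complex.I_im,
            Complex.ofReal_re, Complex.ofReal_im, Complex.sub_re, Complex.sub_im,
            Complex.one_re, Complex.one_im]
          ring
        rw [hstep1]
        have := half_le_re_inv_one_sub (hu1 t)
        nlinarith
      rw [abs_le]
      constructor <;> linarith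
    calc ∫ t in T..T+1, |((-(L:ℂ) * E t) / (E t - r)).re|
        ≤ ∫ t in T..T+1, (((-((-(Complex.I * (L:ℂ))) * u t)) / (1 - u t)).im + L) :=
          intervalIntegral.integral_mono_on (by linarith) hint1 hint2 hmono
      _ = (∫ t in T..T+1, ((-((-(Complex.I * (L:ℂ))) * u t)) / (1 - u t)).im) + L := by
          rw [intervalIntegral.integral_add key.1 intervalIntegrable_const,
            intervalIntegral.integral_const]
          norm_num
      _ ≤ Real.pi + L := by
          have := abs_le.mp key.2
          linarith [this.2]

lemma prod_map_get {M N : Type*} [CommMonoid N] (l : List M) (g : M → N) :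
    (l.map g).prod = ∏ i : Fin l.length, g (l.get i) := by
  conv_lhs => rw [← List.ofFn_get l, List.map_ofFn, List.prod_ofFn]
  rfl

theorem integral_abs_re_logDeriv_poly_cpow_le {p : ℝ} (hp : 1 < p) (d : ℕ)
    (P : Polynomial ℂ) (hP : P ≠ 0) (hdeg : P.natDegree ≤ d) (T : ℝ)
    (f : ℂ → ℂ) (hf : f = fun s => P.eval ((p : ℂ) ^ (-s)))
    (hz : ∀ t ∈ Set.Icc T (T + 1), f (Complex.I * (t : ℂ)) ≠ 0) :
    ∫ t in T..(T + 1),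
        |((deriv f (Complex.I * (t : ℂ)) / f (Complex.I * (t : ℂ))).re)| ≤
      d * (Real.pi + Real.log p) := by
  have hp0 : (0:ℝ) < p := lt_trans zero_lt_one hp
  have hpc : (p:ℂ) ≠ 0 := Complex.ofReal_ne_zero.mpr hp0.ne'
  set L : ℝ := Real.log p with hLdef
  have hL : 0 < L := Real.log_pos hp
  have hcpow : ∀ s : ℂ, (p:ℂ) ^ (-s) = Complex.exp (-(L:ℂ) * s) := by
    intro s
    rw [Complex.cpow_def_of_ne_zero hpc (-s), ← Complex.ofReal_log hp0.le]
    congr 1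
    ring
  have hEeq : ∀ t : ℝ, Complex.exp (-(L:ℂ) * (Complex.I * (t:ℂ))) =
      Complex.exp (-(Complex.I * (L:ℂ)) * (t:ℂ)) := by
    intro t
    congr 1
    ring
  set c : ℂ := P.leadingCoeff with hcdef
  have hc : c ≠ 0 := Polynomial.leadingCoeff_ne_zero.mpr hP
  set l : List ℂ := P.roots.toList with hldef
  set k : ℕ := l.length with hkdef
  have hkd : k ≤ d := by
    have h1 : k = Multiset.card P.roots := Multiset.length_toList _
    have h2 := Polynomial.card_roots' P
    omega
  -- factorization
  have hfact : ∀ z : ℂ, P.eval z = c * ∏ i : Fin k, (z - l.get i) := by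
    intro z
    have hsplit := (Polynomial.C_leadingCoeff_mul_prod_multiset_X_sub_C
      (IsAlgClosed.card_roots_eq_natDegree (k := ℂ) (p := P))).symm
    conv_lhs => rw [hsplit]
    rw [Polynomial.eval_mul, Polynomial.eval_C, Polynomial.eval_multiset_prod]
    congr 1
    rw [Multiset.map_map]
    have hl : P.roots = (l : Multiset ℂ) := (Multiset.coe_toList _).symm
    rw [hl, Multiset.map_coe, Multiset.prod_coe, prod_map_get]
    congr 1
    funext i
    simp
  -- the factors as functions
  set G : Fin k → ℂ → ℂ := fun i => fun s => Complex.exp (-(L:ℂ) * s) - l.get i with hGdef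
  have hfeq : f = fun s => c * ∏ i : Fin k, G i s := by
    funext s
    rw [hf]
    simp only [hcpow s, hfact (Complex.exp (-(L:ℂ) * s)), hGdef]
  have hGderiv : ∀ (i : Fin k) (s : ℂ),
      HasDerivAt (G i) (-(L:ℂ) * Complex.exp (-(L:ℂ) * s)) s := by
    intro i s
    have h1 : HasDerivAt (fun s : ℂ => Complex.exp (-(L:ℂ) * s))
        (-(L:ℂ) * Complex.exp (-(L:ℂ) * s)) s := by
      have h0 : HasDerivAt (fun s : ℂ => -(L:ℂ) * s) (-(L:ℂ)) s := by
        simpa using (hasDerivAt_id s).const_mul (-(L:ℂ))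
      simpa [mul_comm] using h0.cexp
    exact h1.sub_const _
  -- roots are avoided on the segment
  have hroot : ∀ i : Fin k, P.eval (l.get i) = 0 := by
    intro i
    have hmem : l.get i ∈ P.roots := by
      rw [hldef] at *
      exact (Multiset.mem_toList).mp (List.get_mem ..)
    exact (Polynomial.mem_roots hP).mp hmem
  have hne : ∀ t ∈ Set.Icc T (T+1), ∀ i : Fin k,
      Complex.exp (-(Complex.I * (L:ℂ)) * (t:ℂ)) - l.get i ≠ 0 := by
    intro t ht i hc0
    apply hz t ht
    rw [hf]
    show Polynomial.eval ((p:ℂ) ^ (-(Complex.I * (t:ℂ)))) P = 0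
    have heq : (p:ℂ) ^ (-(Complex.I * (t:ℂ))) = l.get i := by
      rw [hcpow, hEeq t]
      linear_combination hc0
    rw [heq]
    exact hroot i
  -- the per-factor integrand
  set w : Fin k → ℝ → ℂ := fun i t =>
    (-(L:ℂ) * Complex.exp (-(Complex.I * (L:ℂ)) * (t:ℂ))) /
      (Complex.exp (-(Complex.I * (L:ℂ)) * (t:ℂ)) - l.get i) with hwdef
  -- pointwise identity on the segment
  have hpt : ∀ t ∈ Set.Icc T (T+1),
      deriv f (Complex.I * (t:ℂ)) / f (Complex.I * (t:ℂ)) = ∑ i : Fin k, w i t := by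
    intro t ht
    have h1 : deriv f (Complex.I * (t:ℂ)) / f (Complex.I * (t:ℂ)) =
        logDeriv f (Complex.I * (t:ℂ)) := (logDeriv_apply _ _).symm
    rw [h1, hfeq]
    rw [logDeriv_const_mul _ _ hc]
    rw [show (fun s => ∏ i : Fin k, G i s) = (∏ i : Fin k, G i ·) from rfl]
    rw [logDeriv_prod (s := Finset.univ) (f := G) (x := Complex.I * (t:ℂ))
      (fun i _ => by
        have h2 := hne t ht i
        simp only [hGdef]
        rw [show -(L:ℂ) * (Complex.I * (t:ℂ)) = -(Complex.I * (L:ℂ)) * (t:ℂ) by ring]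
        exact h2)
      (fun i _ => (hGderiv i _).differentiableAt)]
    apply Finset.sum_congr rfl
    intro i _
    rw [logDeriv_apply, (hGderiv i _).deriv, hwdef]
    simp only [hGdef]
    rw [hEeq t]
  have habs : ∀ t ∈ Set.Icc T (T+1),
      |(deriv f (Complex.I * (t:ℂ)) / f (Complex.I * (t:ℂ))).re| =
      |(∑ i : Fin k, w i t).re| := fun t ht => by rw [hpt t ht]
  -- continuity facts
  have hcontE : Continuous (fun t : ℝ => Complex.exp (-(Complex.I * (L:ℂ)) * (t:ℂ))) :=
    Complex.continuous_exp.comp (continuous_const.mul Complex.continuous_ofReal)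
  have hcontw : ∀ i : Fin k, ContinuousOn (fun t => |(w i t).re|) (Set.Icc T (T+1)) := by
    intro i
    apply ContinuousOn.abs
    apply Complex.continuous_re.comp_continuousOn
    apply ContinuousOn.div
    · exact (continuous_const.mul hcontE).continuousOn
    · exact (hcontE.sub continuous_const).continuousOn
    · exact fun t ht => hne t ht i
  have hT1 : T ≤ T + 1 := by linarith
  have huIcc : Set.uIcc T (T+1) = Set.Icc T (T+1) := Set.uIcc_of_le hT1
  have hwint : ∀ i : Fin k, IntervalIntegrable (fun t => |(w i t).re|)
      MeasureTheory.volume T (T+1) := by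
    intro i
    apply ContinuousOn.intervalIntegrable
    rw [huIcc]
    exact hcontw i
  have hsumint : IntervalIntegrable (fun t => ∑ i : Fin k, |(w i t).re|)
      MeasureTheory.volume T (T+1) := by
    apply ContinuousOn.intervalIntegrable
    rw [huIcc]
    exact continuousOn_finset_sum _ (fun i _ => hcontw i)
  have hlhsint : IntervalIntegrable (fun t => |(∑ i : Fin k, w i t).re|)
      MeasureTheory.volume T (T+1) := by
    apply ContinuousOn.intervalIntegrable
    rw [huIcc]
    apply ContinuousOn.abs
    apply Complex.continuous_re.comp_continuousOn
    apply continuousOn_finset_sum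
    intro i _
    apply ContinuousOn.div
    · exact (continuous_const.mul hcontE).continuousOn
    · exact (hcontE.sub continuous_const).continuousOn
    · exact fun t ht => hne t ht i
  calc ∫ t in T..(T + 1),
          |((deriv f (Complex.I * (t : ℂ)) / f (Complex.I * (t : ℂ))).re)|
      = ∫ t in T..(T + 1), |(∑ i : Fin k, w i t).re| := by
        apply intervalIntegral.integral_congr
        rw [huIcc]
        exact habs
    _ ≤ ∫ t in T..(T + 1), ∑ i : Fin k, |(w i t).re| := by
        apply intervalIntegral.integral_mono_on hT1 hlhsint hsumint
        intro t _
        rw [Complex.re_sum]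
        exact Finset.abs_sum_le_sum_abs _ _
    _ = ∑ i : Fin k, ∫ t in T..(T + 1), |(w i t).re| := by
        rw [intervalIntegral.integral_finset_sum]
        exact fun i _ => hwint i
    _ ≤ ∑ _i : Fin k, (Real.pi + L) := by
        apply Finset.sum_le_sum
        intro i _
        exact perFactor hL T (l.get i)
          (fun t ht => sub_ne_zero.mp (hne t ht i))
    _ = (k : ℝ) * (Real.pi + L) := by
        rw [Finset.sum_const, Finset.card_univ, Fintype.card_fin, nsmul_eq_mul]
    _ ≤ (d : ℝ) * (Real.pi + L) := by
        apply mul_le_mul_of_nonneg_right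
        · exact_mod_cast hkd
        · linarith [Real.pi_pos]
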